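/- Consider the heterogeneous cone percolation process on T_d^+ in which all the radii are Bernoulli random variables: P[R_j = 1] = 1 − P[R_j = 0] for j = 0,1,2,.... If liminf_{j→∞} d · P[R_j = 1] > 1, then the process survives (the set I of reached vertices is infinite) with positive probability. -/

import Mathlib

open MeasureTheory ProbabilityTheory Filter Set
open scoped ENNReal

noncomputable section

/-- Length of the longest common prefix of two lists. -/
def lcpLen {α : Type*} [DecidableEq α] : List α → List α → ℕ
  | a :: as, b :: bs => if a = b then lcpLen as bs + 1 else 0
  | _, _ => 0

/-- Graph distance on the rooted tree `T_d^+`, whose vertices are the finite words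
over `Fin d` (every vertex has exactly `d` children); the root `O` is `[]`. -/
def distPlus {d : ℕ} (u v : List (Fin d)) : ℕ :=
  (u.length - lcpLen u v) + (v.length - lcpLen u v)

/-- Vertices of the homogeneous tree `T_d`, in which every vertex has `d + 1`
neighbours: the origin `O` is `none`; any other vertex is coded by its first step
away from the origin (one of `d + 1` directions) followed by a word over `Fin d`
(after the first step, `d` directions lead away from the origin). -/
abbrev TdVertex (d : ℕ) : Type := Option (Fin (d + 1) × List (Fin d))

/-- Graph distance on the homogeneous tree `T_d`. -/
def distFull {d : ℕ} : TdVertex d → TdVertex d → ℕ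
  | none, none => 0
  | none, some (_, l) => l.length + 1
  | some (_, l), none => l.length + 1
  | some (a, l), some (b, m) =>
      if a = b then (l.length - lcpLen l m) + (m.length - lcpLen l m)
      else (l.length + 1) + (m.length + 1)

/-- The sets `I_n` of the cone percolation process with radii `r` on the tree with
vertex set `V`, graph distance `dist` and origin `o`:  `I_0 = {o}` and
`I_{n+1} = ⋃_{u ∈ I_n} B_u` where `B_u = {w : dist u w ≤ r u}`. -/
def reachSet {V : Type*} (dist : V → V → ℕ) (o : V) (r : V → ℕ) : ℕ → Set V
  | 0 => {o}
  | n + 1 => ⋃ u ∈ reachSet dist o r n, {w | dist u w ≤ r u}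

/-- `I = ⋃_{n ≥ 0} I_n`, the set of vertices that ever hear the rumour. -/
def cluster {V : Type*} (dist : V → V → ℕ) (o : V) (r : V → ℕ) : Set V :=
  ⋃ n, reachSet dist o r n

/-- The survival event `V = {|I| = ∞}`, for radii given by the random field `R`. -/
def survival {V : Type*} {Ω : Type*} (dist : V → V → ℕ) (o : V) (R : V → Ω → ℕ) : Set Ω :=
  {ω | (cluster dist o fun u => R u ω).Infinite}

/-- The event `V^n_{u,v}` that the process restarted from `u` alone reaches
`v = u ++ w` in at most `n = w.length` steps:  writing `u_i = u ++ w.take i` for the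
path from `u` to `v`, it is `⋂_{k=0}^{n-1} ⋃_{i=0}^{k} {R̄_{u_i} ≥ k + 1 - i}`. -/
def reachEvent {d : ℕ} {Ω : Type*} (R : List (Fin d) → Ω → ℕ) (u w : List (Fin d)) : Set Ω :=
  ⋂ k ∈ Finset.range w.length, ⋃ i ∈ Finset.range (k + 1),
    {ω | k + 1 - i ≤ R (u ++ w.take i) ω}

/-! ### Auxiliary lemmas on `lcpLen` and `distPlus` -/

lemma lcpLen_append {α : Type*} [DecidableEq α] (l t : List α) :
    lcpLen l (l ++ t) = l.length := by
  induction l with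
  | nil => rfl
  | cons a as ih => simp [lcpLen, ih]

lemma le_lcpLen_of_take_eq {α : Type*} [DecidableEq α] :
    ∀ (u v : List α) (j : ℕ), u.take j = v.take j → min j u.length ≤ lcpLen u v := by
  intro u
  induction u with
  | nil => simp
  | cons a as ih =>
    intro v j h
    cases v with
    | nil =>
      cases j with
      | zero => simp
      | succ j => simp at h
    | cons b bs =>
      cases j with
      | zero => simp
      | succ j =>
        simp only [List.take_succ_cons, List.cons.injEq] at h
        simp only [lcpLen, h.1, if_true, List.length_cons]
        have := ih bs j h.2
        omega

lemma take_eq_take_of_le_lcpLen {α : Type*} [DecidableEq α] :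
    ∀ (u v : List α) (j : ℕ), j ≤ lcpLen u v → u.take j = v.take j := by
  intro u
  induction u with
  | nil =>
    intro v j h
    have h0 : lcpLen ([] : List α) v = 0 := by cases v <;> rfl
    rw [h0] at h
    interval_cases j
    simp
  | cons a as ih =>
    intro v j h
    cases v with
    | nil =>
      have hj : j = 0 := by simp [lcpLen] at h; omega
      subst hj; simp
    | cons b bs =>
      by_cases hab : a = b
      · cases j with
        | zero => simp
        | succ j =>
          simp only [lcpLen, hab, if_true] at h
          simp [hab, ih bs j (by omega)]
      · have hj : j = 0 := by simp [lcpLen, hab] at h; omega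
        subst hj; simp

lemma distPlus_append {d : ℕ} (u t : List (Fin d)) : distPlus u (u ++ t) = t.length := by
  simp [distPlus, lcpLen_append]

/-! ### Reaching along an alive path -/

/-- A word all of whose proper prefixes have radius at least 1 is reached. -/
lemma mem_reachSet_of_alive {d : ℕ} (r : List (Fin d) → ℕ) (w : List (Fin d))
    (h : ∀ i, i < w.length → 1 ≤ r (w.take i)) :
    w ∈ reachSet distPlus ([] : List (Fin d)) r w.length := by
  induction w using List.reverseRecOn with
  | nil => simp [reachSet]
  | append_singleton u a ih =>
    have hu : u ∈ reachSet distPlus ([] : List (Fin d)) r u.length := by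
      apply ih
      intro i hi
      have := h i (by simp; omega)
      rwa [List.take_append_of_le_length (by omega)] at this
    have hlen : (u ++ [a]).length = u.length + 1 := by simp
    rw [hlen]
    simp only [reachSet, Set.mem_iUnion]
    refine ⟨u, hu, ?_⟩
    simp only [Set.mem_setOf_eq, distPlus_append]
    have := h u.length (by simp)
    rwa [List.take_left] at this

lemma infinite_of_forall_length {α : Type*} {S : Set (List α)}
    (h : ∀ n : ℕ, ∃ w ∈ S, w.length = n) : S.Infinite := by
  intro hfin
  have h1 : (Set.univ : Set ℕ) ⊆ List.length '' S := by
    rintro n -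
    obtain ⟨w, hw, rfl⟩ := h n
    exact ⟨w, hw, rfl⟩
  exact Set.infinite_univ ((hfin.image List.length).subset h1)

/-! ### Alive events -/

/-- The event that every proper prefix of `w` has radius at least 1. -/
def aliveSet {d : ℕ} {Ω : Type*} (R : List (Fin d) → Ω → ℕ) (w : List (Fin d)) : Set Ω :=
  ⋂ i ∈ Finset.range w.length, R (w.take i) ⁻¹' (Set.Ici 1)

lemma aliveSet_take {d : ℕ} {Ω : Type*} (R : List (Fin d) → Ω → ℕ) (w : List (Fin d))
    {m : ℕ} (hm : m ≤ w.length) : aliveSet R w ⊆ aliveSet R (w.take m) := by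
  intro ω hω
  simp only [aliveSet, Set.mem_iInter] at hω ⊢
  intro i hi
  rw [List.length_take] at hi
  simp only [Finset.mem_range] at hi
  rw [List.take_take, min_eq_left (by omega : i ≤ m)]
  exact hω i (Finset.mem_range.mpr (by omega))

lemma ofFn_take_eq_iff {d n : ℕ} (f g : Fin n → Fin d) (m : ℕ) :
    (List.ofFn f).take m = (List.ofFn g).take m ↔ ∀ i : Fin n, (i : ℕ) < m → f i = g i := by
  constructor
  · intro h i hi
    have h1 := List.getElem_of_eq h (i := (i : ℕ)) (by simp; omega)
    simpa using h1
  · intro h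
    apply List.ext_getElem (by simp)
    intro i h1 h2
    simp only [List.length_take, List.length_ofFn, lt_min_iff] at h1
    simp only [List.getElem_take, List.getElem_ofFn]
    exact h ⟨i, h1.2⟩ h1.1

lemma ofFn_comp_castSucc_eq_take {d n : ℕ} (f : Fin (n + 1) → Fin d) :
    List.ofFn (f ∘ Fin.castSucc) = (List.ofFn f).take n := by
  apply List.ext_getElem (by simp)
  intro i h1 h2
  simp only [List.getElem_take, List.getElem_ofFn, Function.comp_apply]
  congr 1

/-! ### Counting -/

lemma card_agree_le (d n m : ℕ) (f : Fin n → Fin d) :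
    (Finset.univ.filter fun g : Fin n → Fin d => ∀ i : Fin n, (i : ℕ) < m → g i = f i).card
      ≤ d ^ (n - m) := by
  classical
  have h : (Finset.univ.filter fun g : Fin n → Fin d =>
      ∀ i : Fin n, (i : ℕ) < m → g i = f i).card ≤
      (Finset.univ : Finset (Fin (n - m) → Fin d)).card := by
    apply Finset.card_le_card_of_injOn
      (fun (g : Fin n → Fin d) (j : Fin (n - m)) => g ⟨m + (j : ℕ), by have := j.isLt; omega⟩)
      (fun g _ => Finset.mem_univ _)
    intro g hg g' hg' heq
    simp only [Finset.coe_filter, Set.mem_setOf_eq, Finset.mem_univ, true_and] at hg hg'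
    funext i
    by_cases hi : (i : ℕ) < m
    · rw [hg i hi, hg' i hi]
    · have hlt : (i : ℕ) - m < n - m := by have := i.isLt; omega
      have h1 := congrFun heq ⟨(i : ℕ) - m, hlt⟩
      simp only at h1
      have he : (⟨m + ((i : ℕ) - m), by have := i.isLt; omega⟩ : Fin n) = i := by
        ext; simp; omega
      rwa [he] at h1
  calc _ ≤ (Finset.univ : Finset (Fin (n - m) → Fin d)).card := h
    _ = d ^ (n - m) := by simp [Finset.card_univ, Fintype.card_fun]

/-- The set of proper prefixes of a word, as a `Finset`. -/
def prefixes {d : ℕ} (w : List (Fin d)) : Finset (List (Fin d)) :=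
  (Finset.range w.length).image (fun i => w.take i)

lemma aliveSet_eq_biInter {d : ℕ} {Ω : Type*} (R : List (Fin d) → Ω → ℕ) (w : List (Fin d)) :
    aliveSet R w = ⋂ u ∈ prefixes w, R u ⁻¹' (Set.Ici 1) := by
  ext ω
  simp only [aliveSet, prefixes, Set.mem_iInter, Finset.mem_image, Finset.mem_range]
  constructor
  · rintro h u ⟨i, hi, rfl⟩
    exact h i hi
  · intro h i hi
    exact h _ ⟨i, hi, rfl⟩

section Main

variable {d : ℕ} {Ω : Type*} [MeasurableSpace Ω] (P : Measure Ω)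
  (R : List (Fin d) → Ω → ℕ) (q : ℕ → ℝ≥0∞)

lemma prod_prefixes (w : List (Fin d)) (s : Finset ℕ) (hs : ∀ i ∈ s, i ≤ w.length) :
    ∏ u ∈ s.image (fun i => w.take i), q u.length = ∏ i ∈ s, q i := by
  rw [Finset.prod_image]
  · apply Finset.prod_congr rfl
    intro i hi
    rw [List.length_take, min_eq_left (hs i hi)]
  · intro i hi j hj hij
    have := congrArg List.length hij
    simp only [List.length_take] at this
    have h1 := hs i hi; have h2 := hs j hj
    omega

lemma prob_biInter (hRIndep : iIndepFun R P)
    (hsingle : ∀ u : List (Fin d), P (R u ⁻¹' (Set.Ici 1)) = q u.length)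
    (s : Finset (List (Fin d))) :
    P (⋂ u ∈ s, R u ⁻¹' (Set.Ici 1)) = ∏ u ∈ s, q u.length := by
  rw [hRIndep.measure_inter_preimage_eq_mul s (sets := fun _ => Set.Ici 1)
    (fun _ _ => measurableSet_Ici)]
  exact Finset.prod_congr rfl fun u _ => hsingle u

lemma prob_aliveSet (hRIndep : iIndepFun R P)
    (hsingle : ∀ u : List (Fin d), P (R u ⁻¹' (Set.Ici 1)) = q u.length)
    {n : ℕ} (f : Fin n → Fin d) :
    P (aliveSet R (List.ofFn f)) = ∏ i ∈ Finset.range n, q i := by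
  rw [aliveSet_eq_biInter, prob_biInter P R q hRIndep hsingle, prefixes, List.length_ofFn,
    prod_prefixes]
  intro i hi
  simp only [Finset.mem_range, List.length_ofFn] at hi ⊢
  omega

lemma pair_bound (hRIndep : iIndepFun R P)
    (hsingle : ∀ u : List (Fin d), P (R u ⁻¹' (Set.Ici 1)) = q u.length)
    {n : ℕ} (hn : 0 < n) (f g : Fin n → Fin d) :
    ∃ k, k < n ∧ (∀ i : Fin n, (i : ℕ) < k → f i = g i) ∧
      P (aliveSet R (List.ofFn f) ∩ aliveSet R (List.ofFn g)) ≤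
        (∏ j ∈ Finset.range n, q j) * ∏ j ∈ Finset.Ico (k + 1) n, q j := by
  classical
  set w := List.ofFn f with hw
  set w' := List.ofFn g with hw'
  have hwl : w.length = n := List.length_ofFn (f := f)
  have hwl' : w'.length = n := List.length_ofFn (f := g)
  set m := lcpLen w w' with hm
  refine ⟨min m (n - 1), by omega, ?_, ?_⟩
  · intro i hi
    have ht := take_eq_take_of_le_lcpLen w w' (min m (n - 1)) (by omega)
    exact ((ofFn_take_eq_iff f g (min m (n - 1))).mp ht) i hi
  · set T : Finset (List (Fin d)) := (Finset.Ico (min m (n - 1) + 1) n).image (fun i => w'.take i)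
      with hT
    have hdisj : Disjoint (prefixes w) T := by
      rw [Finset.disjoint_left]
      rintro u hu huT
      simp only [prefixes, hT, Finset.mem_image, Finset.mem_range, Finset.mem_Ico] at hu huT
      obtain ⟨i, hi, rfl⟩ := hu
      obtain ⟨j, hj, hju⟩ := huT
      have hlen : j = i := by
        have := congrArg List.length hju
        simp only [List.length_take] at this
        omega
      subst hlen
      have := le_lcpLen_of_take_eq w w' j hju.symm
      rw [hwl] at this
      omega
    have hsub : aliveSet R w ∩ aliveSet R w' ⊆ ⋂ u ∈ prefixes w ∪ T, R u ⁻¹' (Set.Ici 1) := by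
      rw [aliveSet_eq_biInter R w, aliveSet_eq_biInter R w']
      intro ω hω
      rw [Set.mem_iInter₂]
      intro u hu
      rcases Finset.mem_union.mp hu with h | h
      · exact Set.mem_iInter₂.mp hω.1 u h
      · have : u ∈ prefixes w' := by
          simp only [prefixes, hT, Finset.mem_image, Finset.mem_range, Finset.mem_Ico]
            at h ⊢
          obtain ⟨j, hj, rfl⟩ := h
          exact ⟨j, by omega, rfl⟩
        exact Set.mem_iInter₂.mp hω.2 u this
    calc P (aliveSet R w ∩ aliveSet R w')
        ≤ P (⋂ u ∈ prefixes w ∪ T, R u ⁻¹' (Set.Ici 1)) := measure_mono hsub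
      _ = ∏ u ∈ prefixes w ∪ T, q u.length := prob_biInter P R q hRIndep hsingle _
      _ = (∏ u ∈ prefixes w, q u.length) * ∏ u ∈ T, q u.length := Finset.prod_union hdisj
      _ = (∏ j ∈ Finset.range n, q j) * ∏ j ∈ Finset.Ico (min m (n - 1) + 1) n, q j := by
          rw [prefixes, hwl, prod_prefixes q w _ (fun i hi => by
            simp only [Finset.mem_range] at hi; omega),
            hT, prod_prefixes q w' _ (fun i hi => by
            simp only [Finset.mem_Ico] at hi; omega)]

end Main

/-- Heterogeneous cone percolation on `T_d^+` in which all the radii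
are Bernoulli random variables: the radius of a vertex at distance `z` from the root
has law `ν z`, concentrated on `{0, 1}`.  If `liminf_{j→∞} d · P[R_j = 1] > 1`, then
the set of reached vertices is infinite with positive probability. -/
theorem heterogeneousConePercolation_bernoulli_survives
    (d : ℕ) (hd : 2 ≤ d) (ν : ℕ → Measure ℕ) [∀ z, IsProbabilityMeasure (ν z)]
    (hν : ∀ z, ν z {0} < 1)
    (hBernoulli : ∀ z, ν z {0} + ν z {1} = 1)
    (Ω : Type*) [MeasurableSpace Ω] (P : Measure Ω) [IsProbabilityMeasure P]
    (R : List (Fin d) → Ω → ℕ) (hRMeas : ∀ u, Measurable (R u))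
    (hRIndep : iIndepFun R P)
    (hRDist : ∀ u, Measure.map (R u) P = ν u.length)
    (hliminf : 1 < Filter.liminf (fun j : ℕ => (d : ℝ≥0∞) * ν j {1}) Filter.atTop) :
    0 < P (survival distPlus ([] : List (Fin d)) R) := by
  classical
  set D : ℝ≥0∞ := (d : ℝ≥0∞) with hD
  have hD0 : D ≠ 0 := by
    simp only [hD, ne_eq, Nat.cast_eq_zero]
    omega
  have hDtop : D ≠ ⊤ := by simp [hD]
  set q : ℕ → ℝ≥0∞ := fun j => ν j (Set.Ici 1) with hq
  -- `q j` equals `ν j {1}`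
  have hq_eq : ∀ j, q j = ν j {1} := by
    intro j
    have hcompl : (Set.Ici 1 : Set ℕ) = {0}ᶜ := by
      ext m; simp [Nat.one_le_iff_ne_zero]
    have h0top : ν j {0} ≠ ⊤ := measure_ne_top _ _
    have h1 : ν j (Set.Ici 1) = 1 - ν j {0} := by
      rw [hcompl, measure_compl (measurableSet_singleton 0) h0top, measure_univ]
    have h2 := hBernoulli j
    rw [add_comm] at h2
    simp only [hq]
    rw [h1]
    exact (ENNReal.eq_sub_of_add_eq h0top h2).symm
  have hq1 : ∀ j, q j ≤ 1 := fun j => prob_le_one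
  have hq0 : ∀ j, q j ≠ 0 := by
    intro j h
    have h1 : ν j {1} = 0 := by rw [← hq_eq j]; exact h
    have h2 := hBernoulli j
    rw [h1, add_zero] at h2
    exact absurd h2 (hν j).ne
  have hqtop : ∀ j, q j ≠ ⊤ := fun j => (lt_of_le_of_lt (hq1 j) ENNReal.one_lt_top).ne
  set Q : ℕ → ℝ≥0∞ := fun n => ∏ j ∈ Finset.range n, q j with hQ
  have hQ0 : ∀ n, Q n ≠ 0 := fun n => Finset.prod_ne_zero_iff.mpr fun j _ => hq0 j
  have hQ1 : ∀ n, Q n ≤ 1 := fun n => Finset.prod_le_one (fun _ _ => zero_le) fun j _ => hq1 j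
  have hQtop : ∀ n, Q n ≠ ⊤ := fun n => (lt_of_le_of_lt (hQ1 n) ENNReal.one_lt_top).ne
  set M : ℕ → ℝ≥0∞ := fun k => D ^ k * Q k with hM
  have hM0 : ∀ k, M k ≠ 0 := fun k => mul_ne_zero (pow_ne_zero _ hD0) (hQ0 k)
  have hMtop : ∀ k, M k ≠ ⊤ := fun k => ENNReal.mul_ne_top (ENNReal.pow_ne_top hDtop) (hQtop k)
  set C : ℝ≥0∞ := ∑' k : ℕ, D * (M (k + 1))⁻¹ with hC
  -- single site probabilities
  have hsingle : ∀ u : List (Fin d), P (R u ⁻¹' (Set.Ici 1)) = q u.length := by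
    intro u
    rw [← Measure.map_apply (hRMeas u) measurableSet_Ici, hRDist u]
  -- `C` is finite
  have hCtop : C ≠ ⊤ := by
    obtain ⟨c, h1c, hcL⟩ := exists_between hliminf
    have hctop : c ≠ ⊤ := (hcL.trans_le le_top).ne
    have hcev : ∀ᶠ j in atTop, c < (d : ℝ≥0∞) * ν j {1} :=
      Filter.eventually_lt_of_lt_liminf hcL
    obtain ⟨J, hJ⟩ := Filter.eventually_atTop.mp hcev
    have hJ' : ∀ j, J ≤ j → c ≤ D * q j := by
      intro j hj
      rw [hq_eq j]
      exact (hJ j hj).le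
    have hstep : ∀ j, M (j + 1) = M j * (D * q j) := by
      intro j
      simp only [hM, hQ]
      rw [pow_succ, Finset.prod_range_succ]
      ring
    have hgeo : ∀ i, M J * c ^ i ≤ M (J + i) := by
      intro i
      induction i with
      | zero => simp
      | succ i ih =>
        have : J + (i + 1) = (J + i) + 1 := rfl
        rw [this, hstep, pow_succ, ← mul_assoc]
        exact mul_le_mul' ih (hJ' (J + i) (Nat.le_add_right _ _))
    have hsplit := Summable.sum_add_tsum_nat_add' (f := fun k => D * (M (k + 1))⁻¹) (k := J)
      ENNReal.summable
    rw [hC, ← hsplit]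
    apply ENNReal.add_ne_top.mpr
    constructor
    · exact (ENNReal.sum_lt_top.mpr fun k _ =>
        (ENNReal.mul_ne_top hDtop (ENNReal.inv_ne_top.mpr (hM0 _))).lt_top).ne
    · have hterm : ∀ i : ℕ, D * (M (i + J + 1))⁻¹ ≤ D * (M J)⁻¹ * (c⁻¹) ^ (i + 1) := by
        intro i
        have h1 : M J * c ^ (i + 1) ≤ M (i + J + 1) := by
          have := hgeo (i + 1)
          rwa [show J + (i + 1) = i + J + 1 from by omega] at this
        have h2 : (M (i + J + 1))⁻¹ ≤ (M J * c ^ (i + 1))⁻¹ := ENNReal.inv_le_inv.mpr h1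
        have h3 : (M J * c ^ (i + 1))⁻¹ = (M J)⁻¹ * (c⁻¹) ^ (i + 1) := by
          rw [ENNReal.mul_inv (Or.inl (hM0 J)) (Or.inl (hMtop J)), ENNReal.inv_pow]
        calc D * (M (i + J + 1))⁻¹ ≤ D * (M J * c ^ (i + 1))⁻¹ := mul_le_mul_right h2 D
          _ = D * (M J)⁻¹ * (c⁻¹) ^ (i + 1) := by rw [h3, mul_assoc]
      have hbound : (∑' i : ℕ, D * (M (i + J + 1))⁻¹) ≤
          D * (M J)⁻¹ * (c⁻¹ * (1 - c⁻¹)⁻¹) := by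
        calc (∑' i : ℕ, D * (M (i + J + 1))⁻¹)
            ≤ ∑' i : ℕ, D * (M J)⁻¹ * (c⁻¹) ^ (i + 1) := ENNReal.tsum_le_tsum hterm
          _ = D * (M J)⁻¹ * ∑' i : ℕ, (c⁻¹) ^ (i + 1) := ENNReal.tsum_mul_left
          _ = D * (M J)⁻¹ * (c⁻¹ * (1 - c⁻¹)⁻¹) := by rw [ENNReal.tsum_geometric_add_one]
      apply ne_top_of_le_ne_top _ hbound
      apply ENNReal.mul_ne_top
      · exact ENNReal.mul_ne_top hDtop (ENNReal.inv_ne_top.mpr (hM0 J))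
      · apply ENNReal.mul_ne_top
        · exact ENNReal.inv_ne_top.mpr (by
            intro h
            rw [h] at h1c
            exact absurd h1c (by simp))
        · exact ENNReal.inv_ne_top.mpr (tsub_pos_of_lt (ENNReal.inv_lt_one.mpr h1c)).ne'
  have hC0 : C ≠ 0 := by
    intro h
    have h1 : D * (M (0 + 1))⁻¹ ≤ C := ENNReal.le_tsum 0
    rw [h] at h1
    have := mul_ne_zero hD0 (ENNReal.inv_ne_zero.mpr (hMtop 1))
    simp only [nonpos_iff_eq_zero] at h1
    exact this h1
  -- the events
  have hAmeas : ∀ {n : ℕ} (f : Fin n → Fin d), MeasurableSet (aliveSet R (List.ofFn f)) := by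
    intro n f
    exact MeasurableSet.iInter fun i => MeasurableSet.iInter fun _ =>
      (hRMeas _) measurableSet_Ici
  set E : ℕ → Set Ω := fun n => ⋃ f : Fin n → Fin d, aliveSet R (List.ofFn f) with hE
  have hEmeas : ∀ n, MeasurableSet (E n) := fun n => MeasurableSet.iUnion fun f => hAmeas f
  -- the second moment bound
  have hEbound : ∀ n, 0 < n → C⁻¹ ≤ P (E n) := by
    intro n hn
    set X : Ω → ℝ≥0∞ := fun ω =>
      ∑ f : Fin n → Fin d, (aliveSet R (List.ofFn f)).indicator (1 : Ω → ℝ≥0∞) ω with hX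
    have hXmeas : Measurable X :=
      Finset.measurable_sum _ fun f _ => measurable_one.indicator (hAmeas f)
    have hX1 : ∫⁻ ω, X ω ∂P = D ^ n * Q n := by
      calc ∫⁻ ω, X ω ∂P
          = ∑ f : Fin n → Fin d, ∫⁻ ω, (aliveSet R (List.ofFn f)).indicator 1 ω ∂P :=
            lintegral_finset_sum _ fun f _ => measurable_one.indicator (hAmeas f)
        _ = ∑ _f : Fin n → Fin d, Q n := by
            refine Finset.sum_congr rfl fun f _ => ?_
            rw [lintegral_indicator_one (hAmeas f)]
            exact prob_aliveSet P R q hRIndep hsingle f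
        _ = D ^ n * Q n := by
            rw [Finset.sum_const, Finset.card_univ, Fintype.card_fun, Fintype.card_fin,
              Fintype.card_fin, nsmul_eq_mul, Nat.cast_pow]
    have hX2 : ∫⁻ ω, X ω ^ 2 ∂P ≤ D ^ (2 * n) * Q n ^ 2 * C := by
      have hsq : ∀ ω, X ω ^ 2 = ∑ f : Fin n → Fin d, ∑ g : Fin n → Fin d,
          (aliveSet R (List.ofFn f) ∩ aliveSet R (List.ofFn g)).indicator (1 : Ω → ℝ≥0∞) ω := by
        intro ω
        rw [sq, hX, Finset.sum_mul_sum]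
        refine Finset.sum_congr rfl fun f _ => Finset.sum_congr rfl fun g _ => ?_
        exact (congrFun (Set.inter_indicator_one) ω).symm
      have hint : ∫⁻ ω, X ω ^ 2 ∂P = ∑ f : Fin n → Fin d, ∑ g : Fin n → Fin d,
          P (aliveSet R (List.ofFn f) ∩ aliveSet R (List.ofFn g)) := by
        rw [lintegral_congr hsq]
        rw [lintegral_finset_sum _ fun f _ => Finset.measurable_sum _ fun g _ =>
          measurable_one.indicator ((hAmeas f).inter (hAmeas g))]
        refine Finset.sum_congr rfl fun f _ => ?_
        rw [lintegral_finset_sum _ fun g _ =>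
          measurable_one.indicator ((hAmeas f).inter (hAmeas g))]
        exact Finset.sum_congr rfl fun g _ =>
          lintegral_indicator_one ((hAmeas f).inter (hAmeas g))
      rw [hint]
      -- bound each pair by a sum over agreement levels
      have hpair : ∀ f g : Fin n → Fin d,
          P (aliveSet R (List.ofFn f) ∩ aliveSet R (List.ofFn g)) ≤
            ∑ k ∈ Finset.range n, if (∀ i : Fin n, (i : ℕ) < k → g i = f i) then
              Q n * ∏ j ∈ Finset.Ico (k + 1) n, q j else 0 := by
        intro f g
        obtain ⟨k, hk, hagree, hle⟩ := pair_bound P R q hRIndep hsingle hn f g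
        have hite : (if (∀ i : Fin n, (i : ℕ) < k → g i = f i) then
            Q n * ∏ j ∈ Finset.Ico (k + 1) n, q j else 0) =
            Q n * ∏ j ∈ Finset.Ico (k + 1) n, q j :=
          if_pos fun i hi => (hagree i hi).symm
        calc P (aliveSet R (List.ofFn f) ∩ aliveSet R (List.ofFn g))
            ≤ Q n * ∏ j ∈ Finset.Ico (k + 1) n, q j := hle
          _ = _ := hite.symm
          _ ≤ _ := Finset.single_le_sum
              (f := fun k' => if (∀ i : Fin n, (i : ℕ) < k' → g i = f i) then
                Q n * ∏ j ∈ Finset.Ico (k' + 1) n, q j else 0)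
              (fun _ _ => zero_le) (Finset.mem_range.mpr hk)
      have harith : ∀ k, k < n →
          ((d ^ n * d ^ (n - k) : ℕ) : ℝ≥0∞) * (Q n * ∏ j ∈ Finset.Ico (k + 1) n, q j) ≤
            D ^ (2 * n) * Q n ^ 2 * (D * (M (k + 1))⁻¹) := by
        intro k hk
        have key : D ^ n * D ^ (n - k) * (Q n * ∏ j ∈ Finset.Ico (k + 1) n, q j) * M (k + 1) =
            D ^ (2 * n) * Q n ^ 2 * D := by
          have hQsplit : Q (k + 1) * ∏ j ∈ Finset.Ico (k + 1) n, q j = Q n := by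
            simp only [hQ]
            exact Finset.prod_range_mul_prod_Ico q (by omega)
          have hMval : M (k + 1) = D ^ (k + 1) * Q (k + 1) := rfl
          calc D ^ n * D ^ (n - k) * (Q n * ∏ j ∈ Finset.Ico (k + 1) n, q j) * M (k + 1)
              = D ^ (n + (n - k) + (k + 1)) *
                (Q n * (Q (k + 1) * ∏ j ∈ Finset.Ico (k + 1) n, q j)) := by
                rw [hMval, pow_add, pow_add]; ring
            _ = D ^ (2 * n + 1) * (Q n * Q n) := by
                rw [show n + (n - k) + (k + 1) = 2 * n + 1 from by omega, hQsplit]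
            _ = D ^ (2 * n) * Q n ^ 2 * D := by rw [pow_succ, sq]; ring
        have heq : D ^ n * D ^ (n - k) * (Q n * ∏ j ∈ Finset.Ico (k + 1) n, q j) =
            D ^ (2 * n) * Q n ^ 2 * (D * (M (k + 1))⁻¹) := by
          have := congrArg (· * (M (k + 1))⁻¹) key
          rw [mul_assoc _ _ (M (k+1))⁻¹, ENNReal.mul_inv_cancel (hM0 _) (hMtop _), mul_one]
            at this
          rw [this, mul_assoc]
        rw [Nat.cast_mul, Nat.cast_pow, Nat.cast_pow, ← hD]
        exact le_of_eq heq
      calc ∑ f : Fin n → Fin d, ∑ g : Fin n → Fin d,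
            P (aliveSet R (List.ofFn f) ∩ aliveSet R (List.ofFn g))
          ≤ ∑ f : Fin n → Fin d, ∑ g : Fin n → Fin d, ∑ k ∈ Finset.range n,
              if (∀ i : Fin n, (i : ℕ) < k → g i = f i) then
                Q n * ∏ j ∈ Finset.Ico (k + 1) n, q j else 0 :=
            Finset.sum_le_sum fun f _ => Finset.sum_le_sum fun g _ => hpair f g
        _ = ∑ k ∈ Finset.range n, ∑ f : Fin n → Fin d, ∑ g : Fin n → Fin d,
              if (∀ i : Fin n, (i : ℕ) < k → g i = f i) then
                Q n * ∏ j ∈ Finset.Ico (k + 1) n, q j else 0 := by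
            exact (Finset.sum_congr rfl fun f _ => Finset.sum_comm).trans Finset.sum_comm
        _ ≤ ∑ k ∈ Finset.range n, D ^ (2 * n) * Q n ^ 2 * (D * (M (k + 1))⁻¹) := by
            apply Finset.sum_le_sum
            intro k hk
            have hk' : k < n := Finset.mem_range.mp hk
            calc ∑ f : Fin n → Fin d, ∑ g : Fin n → Fin d,
                  (if (∀ i : Fin n, (i : ℕ) < k → g i = f i) then
                    Q n * ∏ j ∈ Finset.Ico (k + 1) n, q j else 0)
                ≤ ∑ _f : Fin n → Fin d,
                    ((d ^ (n - k) : ℕ) : ℝ≥0∞) * (Q n * ∏ j ∈ Finset.Ico (k + 1) n, q j) := by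
                  apply Finset.sum_le_sum
                  intro f _
                  rw [← Finset.sum_filter]
                  rw [Finset.sum_const, nsmul_eq_mul]
                  exact mul_le_mul_left (Nat.cast_le.mpr (card_agree_le d n k f)) _
              _ = ((d ^ n * d ^ (n - k) : ℕ) : ℝ≥0∞) *
                    (Q n * ∏ j ∈ Finset.Ico (k + 1) n, q j) := by
                  rw [Finset.sum_const, Finset.card_univ, Fintype.card_fun, Fintype.card_fin,
                    Fintype.card_fin, nsmul_eq_mul, Nat.cast_mul, ← mul_assoc, ← Nat.cast_mul]
              _ ≤ D ^ (2 * n) * Q n ^ 2 * (D * (M (k + 1))⁻¹) := harith k hk'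
        _ ≤ D ^ (2 * n) * Q n ^ 2 * C := by
            rw [← Finset.mul_sum]
            exact mul_le_mul_right (ENNReal.sum_le_tsum (Finset.range n)) _
    -- Cauchy–Schwarz
    have hCS : (∫⁻ ω, X ω ∂P) ^ 2 ≤ (∫⁻ ω, X ω ^ 2 ∂P) * P (E n) := by
      have h2 : Real.HolderConjugate 2 2 := Real.HolderConjugate.two_two
      have hgmeas : Measurable ((E n).indicator (1 : Ω → ℝ≥0∞)) :=
        measurable_one.indicator (hEmeas n)
      have hhold := ENNReal.lintegral_mul_le_Lp_mul_Lq P h2 hXmeas.aemeasurable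
        hgmeas.aemeasurable
      have hXg : (fun a => (X * (E n).indicator (1 : Ω → ℝ≥0∞)) a) = X := by
        funext a
        by_cases h : a ∈ E n
        · simp [Set.indicator_of_mem h]
        · have hXa : X a = 0 := by
            rw [hX]
            apply Finset.sum_eq_zero
            intro f _
            apply Set.indicator_of_notMem
            intro hmem
            exact h (Set.mem_iUnion.mpr ⟨f, hmem⟩)
          simp [Set.indicator_of_notMem h, hXa]
      have e1 : ∫⁻ a, X a ^ (2 : ℝ) ∂P = ∫⁻ a, X a ^ 2 ∂P :=
        lintegral_congr fun a => ENNReal.rpow_two (X a)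
      have e2 : ∫⁻ a, ((E n).indicator (1 : Ω → ℝ≥0∞) a) ^ (2 : ℝ) ∂P = P (E n) := by
        have h3 : ∀ a, ((E n).indicator (1 : Ω → ℝ≥0∞) a) ^ (2 : ℝ) =
            (E n).indicator (1 : Ω → ℝ≥0∞) a := by
          intro a
          by_cases h : a ∈ E n
          · simp [Set.indicator_of_mem h]
          · simp [Set.indicator_of_notMem h, ENNReal.zero_rpow_of_pos (by norm_num : (0:ℝ) < 2)]
        rw [lintegral_congr h3, lintegral_indicator_one (hEmeas n)]
      rw [hXg, e1, e2] at hhold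
      calc (∫⁻ ω, X ω ∂P) ^ 2
          ≤ ((∫⁻ a, X a ^ 2 ∂P) ^ (1 / (2:ℝ)) * P (E n) ^ (1 / (2:ℝ))) ^ 2 :=
            pow_le_pow_left₀ zero_le hhold 2
        _ = (∫⁻ a, X a ^ 2 ∂P) * P (E n) := by
            rw [mul_pow, ← ENNReal.rpow_natCast ((∫⁻ a, X a ^ 2 ∂P) ^ (1 / (2:ℝ))) 2,
              ← ENNReal.rpow_natCast (P (E n) ^ (1 / (2:ℝ))) 2,
              ← ENNReal.rpow_mul, ← ENNReal.rpow_mul]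
            norm_num
    -- combine
    have ha0 : D ^ (2 * n) * Q n ^ 2 ≠ 0 := mul_ne_zero (pow_ne_zero _ hD0) (pow_ne_zero _ (hQ0 n))
    have hatop : D ^ (2 * n) * Q n ^ 2 ≠ ⊤ :=
      ENNReal.mul_ne_top (ENNReal.pow_ne_top hDtop) (ENNReal.pow_ne_top (hQtop n))
    have h1 : D ^ (2 * n) * Q n ^ 2 * 1 ≤ D ^ (2 * n) * Q n ^ 2 * (C * P (E n)) := by
      have hsq : (D ^ n * Q n) ^ 2 = D ^ (2 * n) * Q n ^ 2 := by
        rw [mul_pow, ← pow_mul, mul_comm n 2]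
      calc D ^ (2 * n) * Q n ^ 2 * 1 = (D ^ n * Q n) ^ 2 := by rw [mul_one, hsq]
        _ = (∫⁻ ω, X ω ∂P) ^ 2 := by rw [hX1]
        _ ≤ (∫⁻ ω, X ω ^ 2 ∂P) * P (E n) := hCS
        _ ≤ D ^ (2 * n) * Q n ^ 2 * C * P (E n) := mul_le_mul_left hX2 _
        _ = D ^ (2 * n) * Q n ^ 2 * (C * P (E n)) := by rw [mul_assoc]
    have h3 : 1 ≤ C * P (E n) := (ENNReal.mul_le_mul_iff_right ha0 hatop).mp h1
    calc C⁻¹ = C⁻¹ * 1 := (mul_one _).symm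
      _ ≤ C⁻¹ * (C * P (E n)) := mul_le_mul_right h3 _
      _ = P (E n) := by rw [← mul_assoc, ENNReal.inv_mul_cancel hC0 hCtop, one_mul]
  -- antitonicity
  have hEanti : Antitone E := by
    apply antitone_nat_of_succ_le
    intro n ω hω
    obtain ⟨f, hf⟩ := Set.mem_iUnion.mp hω
    apply Set.mem_iUnion.mpr
    refine ⟨f ∘ Fin.castSucc, ?_⟩
    have hsub : aliveSet R (List.ofFn f) ⊆ aliveSet R ((List.ofFn f).take n) :=
      aliveSet_take R (List.ofFn f) (by simp)
    rw [ofFn_comp_castSucc_eq_take]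
    exact hsub hf
  -- the intersection is contained in the survival event
  have hsub : (⋂ n, E n) ⊆ survival distPlus ([] : List (Fin d)) R := by
    intro ω hω
    simp only [Set.mem_iInter] at hω
    show (cluster distPlus ([] : List (Fin d)) fun u => R u ω).Infinite
    apply infinite_of_forall_length
    intro n
    obtain ⟨f, hf⟩ := Set.mem_iUnion.mp (hω n)
    refine ⟨List.ofFn f, ?_, List.length_ofFn (f := f)⟩
    have halive : ∀ i, i < (List.ofFn f).length → 1 ≤ R ((List.ofFn f).take i) ω := by
      intro i hi
      simp only [aliveSet, Set.mem_iInter] at hf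
      exact hf i (Finset.mem_range.mpr hi)
    have hreach := mem_reachSet_of_alive (fun u => R u ω) (List.ofFn f) halive
    exact Set.mem_iUnion.mpr ⟨(List.ofFn f).length, hreach⟩
  -- conclusion
  have hIcap : P (⋂ n, E n) = ⨅ n, P (E n) :=
    hEanti.measure_iInter (fun n => (hEmeas n).nullMeasurableSet) ⟨0, measure_ne_top P _⟩
  have hlow : C⁻¹ ≤ P (⋂ n, E n) := by
    rw [hIcap]
    refine le_iInf fun n => ?_
    cases n with
    | zero => exact le_trans (hEbound 1 one_pos) (measure_mono (hEanti (Nat.zero_le 1)))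
    | succ m => exact hEbound (m + 1) (Nat.succ_pos m)
  calc (0 : ℝ≥0∞) < C⁻¹ := ENNReal.inv_pos.mpr hCtop
    _ ≤ P (⋂ n, E n) := hlow
    _ ≤ P (survival distPlus ([] : List (Fin d)) R) := measure_mono hsub
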